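/- Let n and l be positive integers with 2l + 3 ≥ n + 2. Then the set of valences of super edge-magic labelings of K_{1,n} ∪ lK_1 is exactly the set of integers k with 2n + l + 4 ≤ k ≤ 3n + 3l + 3; that is, every super edge-magic labeling of K_{1,n} ∪ lK_1 has valence in this range, and for every integer k in this range there exists a super edge-magic labeling of K_{1,n} ∪ lK_1 with valence k. -/

import Mathlib

/-- `f` is an edge-magic labeling of the graph `G` with valence `k`:
`f` is a bijection from `V(G) ∪ E(G)` onto `{1, …, p + q}` and
`f u + f v + f uv = k` for every edge `uv`. -/
def IsEdgeMagic {V : Type*} [Fintype V] (G : SimpleGraph V)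
    (f : V ⊕ G.edgeSet → ℕ) (k : ℕ) : Prop :=
  Set.BijOn f Set.univ (Set.Icc 1 (Fintype.card V + G.edgeSet.ncard)) ∧
  ∀ u v, ∀ h : G.Adj u v,
    f (Sum.inl u) + f (Sum.inl v) + f (Sum.inr ⟨s(u, v), G.mem_edgeSet.mpr h⟩) = k

/-- `f` is a super edge-magic labeling of `G` with valence `k`: an edge-magic
labeling whose vertex labels are exactly `{1, …, p}`. -/
def IsSuperEdgeMagic {V : Type*} [Fintype V] (G : SimpleGraph V)
    (f : V ⊕ G.edgeSet → ℕ) (k : ℕ) : Prop :=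
  IsEdgeMagic G f k ∧ ∀ v, f (Sum.inl v) ∈ Set.Icc 1 (Fintype.card V)

/-- The graph `K_{1,n} ∪ lK_1`: the disjoint union of the star `K_{1,n}`
(with center `0` and leaves `1, …, n`) and `l` isolated vertices
(`n+1, …, n+l`), on `n + l + 1` vertices. -/
def starUnion (n l : ℕ) : SimpleGraph (Fin (n + l + 1)) where
  Adj u v := (u = 0 ∧ v ≠ 0 ∧ (v : ℕ) ≤ n) ∨ (v = 0 ∧ u ≠ 0 ∧ (u : ℕ) ≤ n)
  symm := ⟨fun u v h => h.symm⟩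
  loopless := ⟨fun v h => by rcases h with ⟨h1, h2, _⟩ | ⟨h1, h2, _⟩ <;> exact h2 h1⟩


lemma two_mul_sum_Icc_one (t : ℕ) : 2 * ∑ i ∈ Finset.Icc 1 t, i = t * (t + 1) := by
  induction t with
  | zero => simp
  | succ t ih =>
    rw [Finset.sum_Icc_succ_top (by omega)]
    nlinarith [ih]

lemma sum_distinct_pos_ge (S : Finset ℕ) (h : 0 ∉ S) :
    S.card * (S.card + 1) ≤ 2 * ∑ x ∈ S, x := by
  induction S using Finset.induction_on_max with
  | empty => simp
  | insert a s hlt ih =>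
    have ha : a ∉ s := fun hm => lt_irrefl a (hlt a hm)
    have h0s : 0 ∉ s := fun hm => h (Finset.mem_insert_of_mem hm)
    have hsub : s ⊆ Finset.Icc 1 (a - 1) := by
      intro x hx
      have h1 : x ≠ 0 := fun hh => h0s (hh ▸ hx)
      have h2 := hlt x hx
      simp only [Finset.mem_Icc]; omega
    have hcard : s.card ≤ a - 1 := by
      have := Finset.card_le_card hsub
      simpa [Nat.card_Icc] using this
    have ha0 : a ≠ 0 := fun hh => h (by simp [hh])
    rw [Finset.card_insert_of_notMem ha, Finset.sum_insert ha]
    have := ih h0s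
    have hac : s.card + 1 ≤ a := by omega
    nlinarith [this, hac]

lemma sum_distinct_le (S : Finset ℕ) (p : ℕ) (h : S ⊆ Finset.Icc 1 p) :
    2 * ∑ x ∈ S, x + (p - S.card) * (p - S.card + 1) ≤ p * (p + 1) := by
  have hsd := Finset.sum_sdiff (f := id) h
  have hcs : S.card ≤ p := by
    have := Finset.card_le_card h
    simpa [Nat.card_Icc] using this
  have hcT : (Finset.Icc 1 p \ S).card = p - S.card := by
    rw [Finset.card_sdiff_of_subset h, Nat.card_Icc]; omega
  have h0T : 0 ∉ Finset.Icc 1 p \ S := by simp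
  have hT := sum_distinct_pos_ge _ h0T
  rw [hcT] at hT
  have htot := two_mul_sum_Icc_one p
  simp only [id] at hsd
  omega

lemma starUnion_adj {n l : ℕ} {u v : Fin (n+l+1)} :
    (starUnion n l).Adj u v ↔ (u = 0 ∧ v ≠ 0 ∧ (v : ℕ) ≤ n) ∨ (v = 0 ∧ u ≠ 0 ∧ (u : ℕ) ≤ n) :=
  Iff.rfl

lemma star_mem_edgeSet {n l : ℕ} (e : Sym2 (Fin (n+l+1))) :
    e ∈ (starUnion n l).edgeSet ↔
      ∃ v : Fin (n+l+1), v ≠ 0 ∧ (v : ℕ) ≤ n ∧ e = s(0, v) := by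
  induction e using Sym2.ind with
  | _ a b =>
    rw [SimpleGraph.mem_edgeSet, starUnion_adj]
    constructor
    · rintro (⟨h1, h2, h3⟩ | ⟨h1, h2, h3⟩)
      · exact ⟨b, h2, h3, by rw [h1]⟩
      · exact ⟨a, h2, h3, by rw [h1, Sym2.eq_swap]⟩
    · rintro ⟨v, h1, h2, h3⟩
      rw [Sym2.eq_iff] at h3
      rcases h3 with ⟨rfl, rfl⟩ | ⟨rfl, rfl⟩
      · exact Or.inl ⟨rfl, h1, h2⟩
      · exact Or.inr ⟨rfl, h1, h2⟩

lemma star_edge_equiv {n l : ℕ} (hn : 1 ≤ n) :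
    ∃ eq : Fin n ≃ (starUnion n l).edgeSet, True := by
  have tofun : ∀ i : Fin n, (s(0, (⟨(i:ℕ)+1, by omega⟩ : Fin (n+l+1))) ∈ (starUnion n l).edgeSet) := by
    intro i
    rw [star_mem_edgeSet]
    refine ⟨⟨(i:ℕ)+1, by omega⟩, ?_, by exact i.isLt, rfl⟩
    simp [Fin.ext_iff]
  refine ⟨Equiv.ofBijective (fun i => ⟨_, tofun i⟩) ⟨?_, ?_⟩, trivial⟩
  · intro i j hij
    simp only [Subtype.mk.injEq, Sym2.congr_right, Fin.mk.injEq] at hij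
    exact Fin.ext (by omega)
  · rintro ⟨e, he⟩
    rw [star_mem_edgeSet] at he
    obtain ⟨v, hv0, hvn, rfl⟩ := he
    have hv1 : 1 ≤ (v:ℕ) := by
      rcases Nat.eq_zero_or_pos (v:ℕ) with h | h
      · exact absurd (Fin.ext (by simp [h])) hv0
      · exact h
    refine ⟨⟨(v:ℕ)-1, by omega⟩, ?_⟩
    simp only [Subtype.mk.injEq, Sym2.congr_right]
    exact Fin.ext (by simp; omega)

lemma star_ncard {n l : ℕ} (hn : 1 ≤ n) : (starUnion n l).edgeSet.ncard = n := by
  obtain ⟨eq, -⟩ := star_edge_equiv (l := l) hn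
  rw [← Nat.card_coe_set_eq, ← Nat.card_congr eq, Nat.card_eq_fintype_card, Fintype.card_fin]

lemma combine (n l k F0 SA SE : ℕ) (hn : 1 ≤ n)
    (hkey : n*k + F0 = n*F0 + SA + SE)
    (hlow : (n+1)*(n+1+1) ≤ 2*SA)
    (hup : 2*SA + l*(l+1) ≤ (n+l+1)*(n+l+1+1))
    (hE : 2*SE = n*(3*n+2*l+3)) (h01 : 1 ≤ F0) (h0p : F0 ≤ n+l+1) :
    2*n + l + 4 ≤ k ∧ k ≤ 3*n + 3*l + 3 := by
  constructor
  · have haux : n + F0 ≤ n * F0 + 1 := by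
      obtain ⟨a, rfl⟩ := Nat.exists_eq_add_of_le hn
      obtain ⟨b, rfl⟩ := Nat.exists_eq_add_of_le h01
      nlinarith [Nat.zero_le (a*b)]
    have hmul : 2*n * (2*n+l+4) ≤ 2*n*k := by nlinarith [hkey, hlow, hE, haux]
    exact Nat.le_of_mul_le_mul_left hmul (by omega)
  · have haux2 : n * F0 + (n+l+1) ≤ n * (n+l+1) + F0 := by
      obtain ⟨d, hd⟩ := Nat.exists_eq_add_of_le h0p
      rw [hd]
      nlinarith [mul_le_mul_left hn d]
    have hmul : 2*n*k ≤ 2*n * (3*n+3*l+3) := by nlinarith [hkey, hup, hE, haux2]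
    exact Nat.le_of_mul_le_mul_left hmul (by omega)

lemma forward (n l : ℕ) (hn : 1 ≤ n) (hl : 1 ≤ l) (k : ℕ)
    (f : Fin (n+l+1) ⊕ (starUnion n l).edgeSet → ℕ)
    (hf : IsSuperEdgeMagic (starUnion n l) f k) :
    2*n + l + 4 ≤ k ∧ k ≤ 3*n + 3*l + 3 := by
  obtain ⟨⟨⟨hmaps, hinj', hsurj⟩, hmagic⟩, hvert⟩ := hf
  have hcV : Fintype.card (Fin (n+l+1)) = n+l+1 := by simp
  have hq : (starUnion n l).edgeSet.ncard = n := star_ncard hn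
  have hinj : Function.Injective f := by
    rw [← Set.injOn_univ]; exact hinj'
  have hmap : ∀ x, 1 ≤ f x ∧ f x ≤ 2*n+l+1 := by
    intro x
    have := hmaps (Set.mem_univ x)
    rw [hcV, hq] at this
    simp only [Set.mem_Icc] at this
    omega
  have hv : ∀ v, 1 ≤ f (Sum.inl v) ∧ f (Sum.inl v) ≤ n+l+1 := by
    intro v
    have := hvert v
    rw [hcV] at this
    simpa [Set.mem_Icc] using this
  have hinjl : Function.Injective (fun v : Fin (n+l+1) => f (Sum.inl v)) :=
    fun a b h => Sum.inl_injective (hinj h)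
  have hA : Finset.image (fun v => f (Sum.inl v)) Finset.univ = Finset.Icc 1 (n+l+1) := by
    apply Finset.eq_of_subset_of_card_le
    · intro y hy
      simp only [Finset.mem_image] at hy
      obtain ⟨v, -, rfl⟩ := hy
      simp only [Finset.mem_Icc]; exact hv v
    · rw [Finset.card_image_of_injective _ hinjl, Nat.card_Icc]
      simp
  have hedge_lb : ∀ e : (starUnion n l).edgeSet, n+l+2 ≤ f (Sum.inr e) := by
    intro e
    by_contra hcon
    push_neg at hcon
    have h1 : f (Sum.inr e) ∈ Finset.Icc 1 (n+l+1) := by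
      have := hmap (Sum.inr e)
      simp only [Finset.mem_Icc]; omega
    rw [← hA, Finset.mem_image] at h1
    obtain ⟨v, -, hv'⟩ := h1
    exact absurd (hinj hv') (by simp)
  classical
  set L : Finset (Fin (n+l+1)) := Finset.univ.filter (fun v => v ≠ 0 ∧ (v:ℕ) ≤ n) with hL
  have hLmem : ∀ v, v ∈ L ↔ (v ≠ 0 ∧ (v:ℕ) ≤ n) := by
    intro v; simp [hL]
  have hLcard : L.card = n := by
    have hbij : L.card = (Finset.Icc 1 n).card := by
      apply Finset.card_nbij' (i := fun v : Fin (n+l+1) => (v:ℕ))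
        (j := fun a : ℕ => Fin.ofNat (n+l+1) a)
      · intro v hv'
        rw [Finset.mem_coe, hLmem] at hv'
        simp only [Finset.mem_coe, Finset.mem_Icc]
        have : (v:ℕ) ≠ 0 := fun h0 => hv'.1 (Fin.ext (by simp [h0]))
        exact ⟨by omega, hv'.2⟩
      · intro a ha
        simp only [Finset.mem_coe, Finset.mem_Icc] at ha
        rw [Finset.mem_coe, hLmem]
        have hval : ((Fin.ofNat (n+l+1) a : Fin (n+l+1)) : ℕ) = a := by
          rw [Fin.val_ofNat]; exact Nat.mod_eq_of_lt (by omega)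
        constructor
        · intro h0
          have := congrArg Fin.val h0
          rw [hval] at this
          simp at this
          omega
        · rw [hval]; exact ha.2
      · intro v hv'
        apply Fin.ext
        simp [Fin.val_natCast, Nat.mod_eq_of_lt v.isLt]
      · intro a ha
        simp only [Finset.mem_coe, Finset.mem_Icc] at ha
        simp [Fin.val_natCast]; omega
    rw [hbij, Nat.card_Icc]
    omega
  set ed : Fin (n+l+1) → ℕ := fun i =>
    if h : i ≠ 0 ∧ (i:ℕ) ≤ n then
      f (Sum.inr ⟨s(0, i), (starUnion n l).mem_edgeSet.mpr (Or.inl ⟨rfl, h.1, h.2⟩)⟩)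
    else 0 with hed
  have hmagicL : ∀ i ∈ L, f (Sum.inl 0) + f (Sum.inl i) + ed i = k := by
    intro i hi
    rw [hLmem] at hi
    have hadj : (starUnion n l).Adj 0 i := Or.inl ⟨rfl, hi.1, hi.2⟩
    have hh := hmagic 0 i hadj
    rw [hed]
    simp only [dif_pos hi]
    exact hh
  have hsum1 : ∑ i ∈ L, (f (Sum.inl 0) + f (Sum.inl i) + ed i) = n * k := by
    rw [Finset.sum_congr rfl hmagicL, Finset.sum_const, hLcard, smul_eq_mul]
  have hedinj : ∀ x ∈ L, ∀ y ∈ L, ed x = ed y → x = y := by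
    intro x hx y hy hxy
    rw [hLmem] at hx hy
    rw [hed] at hxy
    simp only [dif_pos hx, dif_pos hy] at hxy
    have := hinj hxy
    simp only [Sum.inr.injEq, Subtype.mk.injEq, Sym2.congr_right] at this
    exact this
  have hedmem : ∀ i ∈ L, ed i ∈ Finset.Icc (n+l+2) (2*n+l+1) := by
    intro i hi
    rw [hLmem] at hi
    rw [hed]
    simp only [dif_pos hi]
    simp only [Finset.mem_Icc]
    exact ⟨hedge_lb _, (hmap _).2⟩
  have hB : Finset.image ed L = Finset.Icc (n+l+2) (2*n+l+1) := by
    apply Finset.eq_of_subset_of_card_le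
    · intro y hy
      simp only [Finset.mem_image] at hy
      obtain ⟨i, hi, rfl⟩ := hy
      exact hedmem i hi
    · rw [Finset.card_image_of_injOn (fun x hx y hy h => hedinj x hx y hy h), hLcard,
        Nat.card_Icc]
      omega
  have hsumE : 2 * ∑ i ∈ L, ed i = n * (3*n+2*l+3) := by
    have h1 : ∑ y ∈ Finset.image ed L, y = ∑ i ∈ L, ed i := Finset.sum_image hedinj
    have hsub : Finset.Icc 1 (n+l+1) ⊆ Finset.Icc 1 (2*n+l+1) := by
      intro x; simp only [Finset.mem_Icc]; omega
    have hsplit : Finset.Icc 1 (2*n+l+1) \ Finset.Icc 1 (n+l+1) = Finset.Icc (n+l+2) (2*n+l+1) := by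
      ext x; simp only [Finset.mem_sdiff, Finset.mem_Icc]; omega
    have hsd := Finset.sum_sdiff (f := id) hsub
    rw [hsplit] at hsd
    simp only [id] at hsd
    have g1 := two_mul_sum_Icc_one (2*n+l+1)
    have g2 := two_mul_sum_Icc_one (n+l+1)
    rw [← h1, hB]
    nlinarith [hsd, g1, g2]
  have h0L : (0 : Fin (n+l+1)) ∉ L := by simp [hLmem]
  set S : Finset ℕ := Finset.image (fun v => f (Sum.inl v)) (insert 0 L) with hS
  have hScard : S.card = n + 1 := by
    rw [hS, Finset.card_image_of_injective _ hinjl, Finset.card_insert_of_notMem h0L, hLcard]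
  have hSsub : S ⊆ Finset.Icc 1 (n+l+1) := by
    rw [hS]; intro y hy
    simp only [Finset.mem_image] at hy
    obtain ⟨v, -, rfl⟩ := hy
    simp only [Finset.mem_Icc]; exact hv v
  have hSsum : ∑ x ∈ S, x = f (Sum.inl 0) + ∑ i ∈ L, f (Sum.inl i) := by
    rw [hS, Finset.sum_image (fun x _ y _ h => hinjl h), Finset.sum_insert h0L]
  have hlow := sum_distinct_pos_ge S (fun h0 => by have := hSsub h0; simp at this)
  have hup := sum_distinct_le S (n+l+1) hSsub
  rw [hScard] at hlow hup
  have hpc : n+l+1 - (n+1) = l := by omega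
  rw [hpc] at hup
  have hkey : n * k + f (Sum.inl 0) = n * f (Sum.inl 0) + ∑ x ∈ S, x + ∑ i ∈ L, ed i := by
    rw [hSsum, ← hsum1, Finset.sum_add_distrib, Finset.sum_add_distrib, Finset.sum_const,
      hLcard, smul_eq_mul]
    ring
  obtain ⟨h01, h0p⟩ := hv 0
  exact combine n l k _ _ _ hn hkey hlow hup hsumE h01 h0p

def gfun (n l c m c' : ℕ) (v : Fin (n+l+1)) : ℕ :=
  if (v:ℕ) = 0 then c
  else if (v:ℕ) ≤ n then m + (v:ℕ) - 1
  else if (v:ℕ) - n < c' then (if (v:ℕ) - n < m then (v:ℕ) - n else (v:ℕ) - n + n)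
  else (if (v:ℕ) - n + 1 < m then (v:ℕ) - n + 1 else (v:ℕ) - n + 1 + n)

def Ffun (n l c m c' k : ℕ) : Fin (n+l+1) ⊕ (starUnion n l).edgeSet → ℕ :=
  Sum.elim (gfun n l c m c')
    (fun e => Sym2.lift ⟨fun a b => k - gfun n l c m c' a - gfun n l c m c' b,
      fun a b => by dsimp only; omega⟩ e.val)

lemma backward (n l k : ℕ) (hn : 1 ≤ n) (hl : 1 ≤ l) (hnl : n ≤ 2*l+1)
    (hk1 : 2*n+l+4 ≤ k) (hk2 : k ≤ 3*n+3*l+3) :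
    ∃ f, IsSuperEdgeMagic (starUnion n l) f k := by
  -- choose center label c and leaf block start m
  obtain ⟨c, m, hcm, hc1, hcp, hm1, hm2, hcase⟩ :
      ∃ c m : ℕ, c + m + (2*n+l+1) = k ∧ 1 ≤ c ∧ c ≤ n+l+1 ∧ 1 ≤ m ∧ m ≤ l+2 ∧
        (c < m ∨ m + n ≤ c) := by
    by_cases h1 : k ≤ 2*n+2*l+4
    · exact ⟨1, k - (2*n+l+2), by omega⟩
    by_cases h2 : k ≤ 3*n+l+2
    · exact ⟨k - (2*n+2*l+3), l+2, by omega⟩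
    by_cases h3 : k ≤ 3*n+2*l+3
    · exact ⟨k - (2*n+l+2), 1, by omega⟩
    · exact ⟨n+l+1, k - (3*n+2*l+2), by omega⟩
  set c' : ℕ := if c < m then c else c - n with hc'def
  have hc' : (c' < m ∧ c' = c) ∨ (m ≤ c' ∧ c' + n = c) := by
    rw [hc'def]; split_ifs <;> omega
  set g : Fin (n+l+1) → ℕ := gfun n l c m c' with hgdef
  have hg0 : g 0 = c := by simp [hgdef, gfun]
  have hgleaf : ∀ v : Fin (n+l+1), (v:ℕ) ≠ 0 → (v:ℕ) ≤ n → g v = m + (v:ℕ) - 1 := by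
    intro v h0 hn'
    rw [hgdef]; unfold gfun; rw [if_neg h0, if_pos hn']
  have hgrange : ∀ v, 1 ≤ g v ∧ g v ≤ n+l+1 := by
    intro v
    have hvlt := v.isLt
    rw [hgdef]; unfold gfun; split_ifs <;> omega
  have hginj : Function.Injective g := by
    intro a b hab
    have ha := a.isLt
    have hb := b.isLt
    apply Fin.ext
    rw [hgdef] at hab; unfold gfun at hab
    split_ifs at hab <;> omega
  set F : Fin (n+l+1) ⊕ (starUnion n l).edgeSet → ℕ := Ffun n l c m c' k with hFdef
  have hFvert : ∀ v, F (Sum.inl v) = g v := fun v => rfl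
  have hFval : ∀ (a b : Fin (n+l+1)) (he : s(a,b) ∈ (starUnion n l).edgeSet),
      F (Sum.inr ⟨s(a,b), he⟩) = k - g a - g b := by
    intro a b he
    rw [hFdef]
    show Sym2.lift _ s(a,b) = _
    rw [Sym2.lift_mk]
  have hval0 : ∀ v : Fin (n+l+1), v ≠ 0 → (v:ℕ) ≠ 0 := by
    intro v hv h0
    exact hv (Fin.ext (by simp [h0]))
  have hFleaf : ∀ (w : Fin (n+l+1)) (he : s(0,w) ∈ (starUnion n l).edgeSet),
      w ≠ 0 → (w:ℕ) ≤ n → F (Sum.inr ⟨s(0,w), he⟩) = 2*n+l+2 - (w:ℕ) := by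
    intro w he hw0 hwn
    rw [hFval 0 w he, hg0, hgleaf w (hval0 w hw0) hwn]
    omega
  -- edge label bounds
  have hFedge : ∀ e : (starUnion n l).edgeSet,
      n+l+2 ≤ F (Sum.inr e) ∧ F (Sum.inr e) ≤ 2*n+l+1 := by
    intro e
    obtain ⟨w, hw0, hwn, hval⟩ := (star_mem_edgeSet e.val).mp e.2
    have he' : s(0,w) ∈ (starUnion n l).edgeSet := hval ▸ e.2
    have : e = ⟨s(0,w), he'⟩ := Subtype.ext hval
    rw [this, hFleaf w he' hw0 hwn]
    have := hval0 w hw0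
    have := w.isLt
    omega
  -- injectivity
  have hinjF : Set.InjOn F Set.univ := by
    rintro (a|e₁) - (b|e₂) - hxy
    · rw [hFvert, hFvert] at hxy
      rw [hginj hxy]
    · exfalso
      rw [hFvert] at hxy
      have h1 := (hgrange a).2
      have h2 := (hFedge e₂).1
      omega
    · exfalso
      rw [hFvert] at hxy
      have h1 := (hgrange b).2
      have h2 := (hFedge e₁).1
      omega
    · obtain ⟨w₁, hw₁0, hw₁n, hval₁⟩ := (star_mem_edgeSet e₁.val).mp e₁.2
      obtain ⟨w₂, hw₂0, hw₂n, hval₂⟩ := (star_mem_edgeSet e₂.val).mp e₂.2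
      have he₁ : s(0,w₁) ∈ (starUnion n l).edgeSet := hval₁ ▸ e₁.2
      have he₂ : s(0,w₂) ∈ (starUnion n l).edgeSet := hval₂ ▸ e₂.2
      have heq₁ : e₁ = ⟨s(0,w₁), he₁⟩ := Subtype.ext hval₁
      have heq₂ : e₂ = ⟨s(0,w₂), he₂⟩ := Subtype.ext hval₂
      rw [heq₁, heq₂] at hxy ⊢
      rw [hFleaf w₁ he₁ hw₁0 hw₁n, hFleaf w₂ he₂ hw₂0 hw₂n] at hxy
      have h1 := hval0 w₁ hw₁0
      have h2 := hval0 w₂ hw₂0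
      have : (w₁:ℕ) = (w₂:ℕ) := by omega
      have : w₁ = w₂ := Fin.ext this
      subst this
      rfl
  -- cardinalities
  have hcV : Fintype.card (Fin (n+l+1)) = n+l+1 := by simp
  have hq : (starUnion n l).edgeSet.ncard = n := star_ncard hn
  have htarget : Fintype.card (Fin (n+l+1)) + (starUnion n l).edgeSet.ncard = 2*n+l+1 := by
    rw [hcV, hq]; ring
  have hmapsF : Set.MapsTo F Set.univ (Set.Icc 1 (2*n+l+1)) := by
    rintro (a|e) -
    · have := hgrange a
      rw [Set.mem_Icc, hFvert]
      omega
    · have := hFedge e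
      rw [Set.mem_Icc]
      omega
  have himage : F '' Set.univ = Set.Icc 1 (2*n+l+1) := by
    apply Set.eq_of_subset_of_ncard_le
    · exact Set.image_subset_iff.mpr hmapsF
    · have h1 : (F '' Set.univ).ncard = (Set.univ : Set (Fin (n+l+1) ⊕ (starUnion n l).edgeSet)).ncard :=
        Set.ncard_image_of_injOn hinjF
      have h2 : (Set.univ : Set (Fin (n+l+1) ⊕ (starUnion n l).edgeSet)).ncard = 2*n+l+1 := by
        rw [Set.ncard_univ, Nat.card_sum]
        rw [Nat.card_eq_fintype_card (α := Fin (n+l+1)), Fintype.card_fin,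
          Nat.card_coe_set_eq, hq]
        ring
      have h3 : (Set.Icc 1 (2*n+l+1)).ncard = 2*n+l+1 := by
        rw [← Finset.coe_Icc, Set.ncard_coe_finset, Nat.card_Icc]
        omega
      omega
    · exact Set.toFinite _
  have hbij : Set.BijOn F Set.univ (Set.Icc 1 (2*n+l+1)) := by
    have := hinjF.bijOn_image
    rwa [himage] at this
  refine ⟨F, ⟨⟨by rwa [htarget], ?_⟩, ?_⟩⟩
  · -- magic condition
    intro u v hadj
    rcases hadj with ⟨hu0, hv0, hvn⟩ | ⟨hv0, hu0, hun⟩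
    · subst hu0
      rw [hFvert, hFvert, hFval 0 v _, hg0, hgleaf v (hval0 v hv0) hvn]
      have hvn' := hval0 v hv0
      omega
    · subst hv0
      rw [hFvert, hFvert, hFval u 0 _, hg0, hgleaf u (hval0 u hu0) hun]
      have hun' := hval0 u hu0
      omega
  · intro v
    rw [hcV, hFvert, Set.mem_Icc]
    exact hgrange v

/-- Let `n` and `l` be positive integers with `2l + 3 ≥ n + 2`. Then the set
of valences of super edge-magic labelings of `K_{1,n} ∪ lK_1` is exactly the
set of integers `k` with `2n + l + 4 ≤ k ≤ 3n + 3l + 3`. -/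
theorem stmt_16 (n l : ℕ) (hn : 1 ≤ n) (hl : 1 ≤ l) (hnl : n + 2 ≤ 2 * l + 3) :
    {k | ∃ f, IsSuperEdgeMagic (starUnion n l) f k} =
      Set.Icc (2 * n + l + 4) (3 * n + 3 * l + 3) := by
  ext k
  simp only [Set.mem_setOf_eq, Set.mem_Icc]
  constructor
  · rintro ⟨f, hf⟩
    exact forward n l hn hl k f hf
  · rintro ⟨hk1, hk2⟩
    exact backward n l k hn hl (by omega) hk1 hk2
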